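/- Let n₁, …, n_N be unit vectors in ℝ³ and η ∈ [0,1], defining the qubit observables M_k with effects E^k_± = (1/2)(I ± η σ·n_k). For each sign vector X = (X₁,…,X_N) ∈ {+1,−1}^N let m_X := Σ_{k=1}^N X_k n_k ∈ ℝ³. If the observables M₁, …, M_N are jointly measurable, then η ≤ (1/N)·max_{X ∈ {+1,−1}^N} |m_X|. -/

import Mathlib

open Matrix ComplexOrder

noncomputable section

abbrev Mat2 := Matrix (Fin 2) (Fin 2) ℂ

/-- Pauli matrix σ₁. -/
def σ1 : Mat2 := !![0, 1; 1, 0]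
/-- Pauli matrix σ₂. -/
def σ2 : Mat2 := !![0, -Complex.I; Complex.I, 0]
/-- Pauli matrix σ₃. -/
def σ3 : Mat2 := !![1, 0; 0, -1]

/-- σ·a for a real 3-vector a. -/
def pauli (a : Fin 3 → ℝ) : Mat2 := (a 0 : ℂ) • σ1 + (a 1 : ℂ) • σ2 + (a 2 : ℂ) • σ3

/-- Euclidean inner product on ℝ³. -/
def dot3 (a b : Fin 3 → ℝ) : ℝ := a 0 * b 0 + a 1 * b 1 + a 2 * b 2

/-- Euclidean norm on ℝ³. -/
def norm3 (a : Fin 3 → ℝ) : ℝ := Real.sqrt (dot3 a a)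

/-- A qubit effect: both `E` and `I - E` positive semidefinite. -/
def IsEffect (E : Mat2) : Prop := E.PosSemidef ∧ (1 - E).PosSemidef

/-- A qubit density matrix. -/
def IsDensity (ρ : Mat2) : Prop := ρ.PosSemidef ∧ ρ.trace = 1

/-- E₊ = (1/2)(I + η σ·n). -/
def Epos (η : ℝ) (n : Fin 3 → ℝ) : Mat2 := (1/2 : ℂ) • (1 + (η : ℂ) • pauli n)
/-- E₋ = (1/2)(I - η σ·n). -/
def Eneg (η : ℝ) (n : Fin 3 → ℝ) : Mat2 := (1/2 : ℂ) • (1 - (η : ℂ) • pauli n)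

/-- A pairwise joint measurement of the noisy spin-1/2 observables along nᵢ and nⱼ. -/
def IsJointMmt (η : ℝ) (ni nj : Fin 3 → ℝ) (Gpp Gpm Gmp Gmm : Mat2) : Prop :=
  IsEffect Gpp ∧ IsEffect Gpm ∧ IsEffect Gmp ∧ IsEffect Gmm ∧
  Gpp + Gpm = Epos η ni ∧ Gmp + Gmm = Eneg η ni ∧
  Gpp + Gmp = Epos η nj ∧ Gpm + Gmm = Eneg η nj

/-- Average anticorrelation probability R₃(ρ), given the anticorrelation effects of the
three pairwise joint measurements. -/
def R3 (ρ G12pm G12mp G13pm G13mp G23pm G23mp : Mat2) : ℝ :=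
  (1/3) * ((ρ * (G12pm + G12mp)).trace.re + (ρ * (G13pm + G13mp)).trace.re +
    (ρ * (G23pm + G23mp)).trace.re)

/-- Parametric joint-measurement family. -/
def Gpp (η : ℝ) (ni nj : Fin 3 → ℝ) (α : ℝ) (a : Fin 3 → ℝ) : Mat2 :=
  (1/2 : ℂ) • (((α/2 : ℝ) : ℂ) • (1 : Mat2) + pauli ((1/2 : ℝ) • (η • (ni + nj) - a)))
def Gpm (η : ℝ) (ni nj : Fin 3 → ℝ) (α : ℝ) (a : Fin 3 → ℝ) : Mat2 :=
  (1/2 : ℂ) • (((1 - α/2 : ℝ) : ℂ) • (1 : Mat2) + pauli ((1/2 : ℝ) • (η • (ni - nj) + a)))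
def Gmp (η : ℝ) (ni nj : Fin 3 → ℝ) (α : ℝ) (a : Fin 3 → ℝ) : Mat2 :=
  (1/2 : ℂ) • (((1 - α/2 : ℝ) : ℂ) • (1 : Mat2) + pauli ((1/2 : ℝ) • (-(η • ni) + η • nj + a)))
def Gmm (η : ℝ) (ni nj : Fin 3 → ℝ) (α : ℝ) (a : Fin 3 → ℝ) : Mat2 :=
  (1/2 : ℂ) • (((α/2 : ℝ) : ℂ) • (1 : Mat2) + pauli ((1/2 : ℝ) • (-(η • (ni + nj)) - a)))

/-- Trine directions in the ZX plane. -/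
def tn1 : Fin 3 → ℝ := ![0, 0, 1]
def tn2 : Fin 3 → ℝ := ![Real.sqrt 3 / 2, 0, -(1/2)]
def tn3 : Fin 3 → ℝ := ![-(Real.sqrt 3 / 2), 0, -(1/2)]

/-- sign of a Boolean, as ±1. -/
def sgn (b : Bool) : ℝ := if b then 1 else -1

/-- m_X = Σₖ Xₖ nₖ. -/
def mvec {N : ℕ} (n : Fin N → Fin 3 → ℝ) (X : Fin N → Bool) : Fin 3 → ℝ :=
  ∑ k, sgn (X k) • n k

/-- Joint measurability of the N noisy qubit observables. -/
def JointlyMeasurable {N : ℕ} (η : ℝ) (n : Fin N → Fin 3 → ℝ) : Prop :=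
  ∃ E : (Fin N → Bool) → Mat2,
    (∀ X, IsEffect (E X)) ∧ (∑ X, E X) = 1 ∧
    (∀ k, ∑ X ∈ Finset.univ.filter (fun X => X k = true), E X = Epos η (n k)) ∧
    (∀ k, ∑ X ∈ Finset.univ.filter (fun X => X k = false), E X = Eneg η (n k))


lemma pauli_apply (a : Fin 3 → ℝ) :
    pauli a = !![(a 2 : ℂ), (a 0 : ℂ) - (a 1 : ℂ) * Complex.I;
                 (a 0 : ℂ) + (a 1 : ℂ) * Complex.I, -(a 2 : ℂ)] := by
  ext i j
  fin_cases i <;> fin_cases j <;>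
    simp [pauli, σ1, σ2, σ3, Matrix.add_apply, Matrix.smul_apply] <;> ring

lemma pauli_herm (a : Fin 3 → ℝ) : (pauli a).IsHermitian := by
  rw [pauli_apply]
  ext i j
  fin_cases i <;> fin_cases j <;>
    simp [Matrix.conjTranspose_apply, Complex.ext_iff]

lemma trace_pauli_mul (a b : Fin 3 → ℝ) :
    (pauli a * pauli b).trace = ((2 * dot3 a b : ℝ) : ℂ) := by
  rw [pauli_apply, pauli_apply, Matrix.mul_fin_two, Matrix.trace_fin_two_of, dot3]
  push_cast
  linear_combination (-2 * (a 1 : ℂ) * (b 1 : ℂ)) * Complex.I_mul_I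

lemma pauli_sq (a : Fin 3 → ℝ) : pauli a * pauli a = ((dot3 a a : ℝ) : ℂ) • 1 := by
  rw [pauli_apply, Matrix.mul_fin_two, dot3]
  ext i j
  fin_cases i <;> fin_cases j <;>
    · simp [Matrix.one_apply]
      push_cast
      first
        | linear_combination (-(a 1 : ℂ) * (a 1 : ℂ)) * Complex.I_mul_I
        | ring

lemma pauli_zero : pauli 0 = 0 := by simp [pauli]

lemma pauli_add (a b : Fin 3 → ℝ) : pauli (a + b) = pauli a + pauli b := by
  simp only [pauli, Pi.add_apply, Complex.ofReal_add, add_smul]; abel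

lemma pauli_smul (r : ℝ) (a : Fin 3 → ℝ) : pauli (r • a) = (r : ℂ) • pauli a := by
  simp only [pauli, Pi.smul_apply, smul_eq_mul, Complex.ofReal_mul, smul_add, smul_smul]

lemma pauli_sum {ι : Type*} (s : Finset ι) (c : ι → ℝ) (v : ι → Fin 3 → ℝ) :
    pauli (∑ i ∈ s, c i • v i) = ∑ i ∈ s, (c i : ℂ) • pauli (v i) := by
  classical
  induction s using Finset.induction with
  | empty => simp [pauli_zero]
  | insert _ _ h ih => rw [Finset.sum_insert h, pauli_add, pauli_smul, ih, Finset.sum_insert h]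

lemma psd_smul_real {A : Mat2} (hA : A.PosSemidef) {c : ℝ} (hc : 0 ≤ c) :
    ((c : ℂ) • A).PosSemidef := by
  refine Matrix.PosSemidef.of_dotProduct_mulVec_nonneg ?_ fun x => ?_
  · unfold Matrix.IsHermitian
    rw [Matrix.conjTranspose_smul, hA.1]
    congr 1
    simp [Complex.ext_iff]
  · rw [Matrix.smul_mulVec, dotProduct_smul, smul_eq_mul]
    have h2 := hA.dotProduct_mulVec_nonneg x
    rw [Complex.nonneg_iff] at h2 ⊢
    constructor
    · rw [Complex.mul_re]
      simp only [Complex.ofReal_re, Complex.ofReal_im, zero_mul, sub_zero]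
      exact mul_nonneg hc h2.1
    · rw [Complex.mul_im]
      simp only [Complex.ofReal_re, Complex.ofReal_im, zero_mul, add_zero]
      rw [← h2.2]; ring

lemma dot3_self_nonneg (a : Fin 3 → ℝ) : 0 ≤ dot3 a a := by
  unfold dot3; nlinarith [sq_nonneg (a 0), sq_nonneg (a 1), sq_nonneg (a 2)]

lemma norm3_sq (a : Fin 3 → ℝ) : norm3 a * norm3 a = dot3 a a :=
  Real.mul_self_sqrt (dot3_self_nonneg a)

lemma norm3_nonneg (a : Fin 3 → ℝ) : 0 ≤ norm3 a := Real.sqrt_nonneg _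

lemma psd_key (a : Fin 3 → ℝ) : (((norm3 a : ℝ) : ℂ) • 1 - pauli a).PosSemidef := by
  rcases eq_or_lt_of_le (norm3_nonneg a) with h0 | h0
  · have hd : dot3 a a = 0 := by rw [← norm3_sq a, ← h0]; ring
    have h1 : a 0 = 0 ∧ a 1 = 0 ∧ a 2 = 0 := by
      unfold dot3 at hd
      refine ⟨by nlinarith [sq_nonneg (a 1), sq_nonneg (a 2)],
        by nlinarith [sq_nonneg (a 0), sq_nonneg (a 2)],
        by nlinarith [sq_nonneg (a 0), sq_nonneg (a 1)]⟩
    have hz : (((norm3 a : ℝ) : ℂ) • 1 - pauli a) = 0 := by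
      rw [pauli_apply, h1.1, h1.2.1, h1.2.2, ← h0]
      ext i j; fin_cases i <;> fin_cases j <;> simp
    rw [hz]
    exact Matrix.PosSemidef.zero
  · set r := norm3 a with hr
    set B : Mat2 := (r : ℂ) • 1 - pauli a with hB
    have hherm : B.IsHermitian := by
      unfold Matrix.IsHermitian
      rw [hB, Matrix.conjTranspose_sub, Matrix.conjTranspose_smul, (pauli_herm a),
        Matrix.conjTranspose_one]
      congr 1
      simp [Complex.ext_iff]
    have hdot : dot3 a a = r * r := (norm3_sq a).symm
    have hBB : B * B = ((2 * r : ℝ) : ℂ) • B := by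
      simp only [hB, sub_mul, mul_sub, smul_mul_assoc, mul_smul_comm, one_mul, mul_one,
        pauli_sq, hdot]
      push_cast
      module
    have hkey : B = ((1 / (2 * r) : ℝ) : ℂ) • (Bᴴ * B) := by
      rw [hherm, hBB, smul_smul]
      rw [show ((1 / (2 * r) : ℝ) : ℂ) * ((2 * r : ℝ) : ℂ) = 1 by
        rw [← Complex.ofReal_mul]; norm_cast; field_simp]
      rw [one_smul]
    rw [hkey]
    exact psd_smul_real (Matrix.posSemidef_conjTranspose_mul_self B) (by positivity)

lemma trace_psd_nonneg {A : Mat2} (hA : A.PosSemidef) : 0 ≤ A.trace := by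
  have h0 := hA.dotProduct_mulVec_nonneg (Pi.single 0 1)
  have h1 := hA.dotProduct_mulVec_nonneg (Pi.single 1 1)
  simp [dotProduct, Matrix.mulVec, Pi.single_apply, Fin.sum_univ_two] at h0 h1
  rw [Matrix.trace_fin_two]
  exact add_nonneg h0 h1

lemma trace_mul_psd_nonneg {A B : Mat2} (hA : A.PosSemidef) (hB : B.PosSemidef) :
    0 ≤ (A * B).trace := by
  open scoped MatrixOrder in
  obtain ⟨C, rfl⟩ := CStarAlgebra.nonneg_iff_eq_star_mul_self.mp hA.nonneg
  rw [Matrix.star_eq_conjTranspose]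
  rw [Matrix.mul_assoc, Matrix.trace_mul_comm]
  exact trace_psd_nonneg (hB.mul_mul_conjTranspose_same C)


/-- Necessary condition for joint measurability of N noisy spin-1/2 qubit observables:
η ≤ (1/N) · max_X |m_X|. -/
theorem joint_measurability_necessary {N : ℕ} (hN : 0 < N)
    (n : Fin N → Fin 3 → ℝ) (hn : ∀ k, norm3 (n k) = 1)
    (η : ℝ) (hη : η ∈ Set.Icc (0 : ℝ) 1)
    (h : JointlyMeasurable η n) :
    η ≤ (1 / N) *
      Finset.univ.sup' Finset.univ_nonempty (fun X : Fin N → Bool => norm3 (mvec n X)) := by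
  classical
  obtain ⟨E, hEff, hsum, hpos, hneg⟩ := h
  set M := Finset.univ.sup' Finset.univ_nonempty
    (fun X : Fin N → Bool => norm3 (mvec n X)) with hM
  -- marginal difference
  have hmarg : ∀ k, ∑ X : Fin N → Bool, ((sgn (X k) : ℝ) : ℂ) • E X
      = (η : ℂ) • pauli (n k) := by
    intro k
    rw [← Finset.sum_filter_add_sum_filter_not Finset.univ (fun X => X k = true)]
    have e1 : ∑ X ∈ Finset.univ.filter (fun X => X k = true), ((sgn (X k) : ℝ) : ℂ) • E X
        = ∑ X ∈ Finset.univ.filter (fun X => X k = true), E X := by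
      refine Finset.sum_congr rfl fun X hX => ?_
      simp only [Finset.mem_filter] at hX
      simp [sgn, hX.2]
    have hset : Finset.univ.filter (fun X : Fin N → Bool => ¬ X k = true)
        = Finset.univ.filter (fun X => X k = false) := by
      ext X; simp
    have e2 : ∑ X ∈ Finset.univ.filter (fun X : Fin N → Bool => ¬ X k = true),
          ((sgn (X k) : ℝ) : ℂ) • E X
        = -∑ X ∈ Finset.univ.filter (fun X => X k = false), E X := by
      rw [hset, ← Finset.sum_neg_distrib]
      refine Finset.sum_congr rfl fun X hX => ?_
      simp only [Finset.mem_filter] at hX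
      simp [sgn, hX.2]
    rw [e1, e2, hpos k, hneg k]
    rw [Epos, Eneg]
    module
  -- per-k trace identity
  have htr : ∀ k, ∑ X : Fin N → Bool, ((sgn (X k) : ℝ) : ℂ) * ((E X) * pauli (n k)).trace
      = ((2 * η : ℝ) : ℂ) := by
    intro k
    have e : ∑ X : Fin N → Bool, ((sgn (X k) : ℝ) : ℂ) * ((E X) * pauli (n k)).trace
        = ((∑ X : Fin N → Bool, ((sgn (X k) : ℝ) : ℂ) • E X) * pauli (n k)).trace := by
      rw [Finset.sum_mul, Matrix.trace_sum]
      refine Finset.sum_congr rfl fun X _ => ?_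
      rw [smul_mul_assoc, Matrix.trace_smul, smul_eq_mul]
    rw [e, hmarg k, smul_mul_assoc, Matrix.trace_smul, trace_pauli_mul, smul_eq_mul]
    have hd : dot3 (n k) (n k) = 1 := by rw [← norm3_sq, hn k]; ring
    rw [hd]
    push_cast; ring
  -- total sum identity
  have hS : ∑ X : Fin N → Bool, ((E X) * pauli (mvec n X)).trace = ((2 * η * N : ℝ) : ℂ) := by
    have expand : ∀ X : Fin N → Bool, ((E X) * pauli (mvec n X)).trace
        = ∑ k, ((sgn (X k) : ℝ) : ℂ) * ((E X) * pauli (n k)).trace := by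
      intro X
      rw [mvec, pauli_sum, Finset.mul_sum, Matrix.trace_sum]
      refine Finset.sum_congr rfl fun k _ => ?_
      rw [mul_smul_comm, Matrix.trace_smul, smul_eq_mul]
    rw [Finset.sum_congr rfl (fun X _ => expand X), Finset.sum_comm,
      Finset.sum_congr rfl (fun k _ => htr k), Finset.sum_const, Finset.card_univ,
      Fintype.card_fin, nsmul_eq_mul]
    push_cast; ring
  -- per-X upper bound
  have htre : ∀ X : Fin N → Bool, 0 ≤ ((E X).trace).re := by
    intro X
    have := trace_psd_nonneg (hEff X).1
    rw [Complex.nonneg_iff] at this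
    exact this.1
  have hub : ∀ X : Fin N → Bool,
      (((E X) * pauli (mvec n X)).trace).re ≤ M * ((E X).trace).re := by
    intro X
    have h1 := trace_mul_psd_nonneg (hEff X).1 (psd_key (mvec n X))
    rw [mul_sub, mul_smul_comm, mul_one, Matrix.trace_sub, Matrix.trace_smul,
      Complex.nonneg_iff] at h1
    have h1re := h1.1
    rw [Complex.sub_re, smul_eq_mul, Complex.mul_re, Complex.ofReal_re, Complex.ofReal_im,
      zero_mul, sub_zero] at h1re
    have hle : norm3 (mvec n X) ≤ M := Finset.le_sup' (fun X : Fin N → Bool => norm3 (mvec n X)) (Finset.mem_univ X)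
    nlinarith [htre X]
  -- sum of traces
  have hT : ∑ X : Fin N → Bool, ((E X).trace).re = 2 := by
    have e : ∑ X : Fin N → Bool, (E X).trace = (1 : Mat2).trace := by
      rw [← Matrix.trace_sum, hsum]
    calc ∑ X : Fin N → Bool, ((E X).trace).re
        = (∑ X : Fin N → Bool, (E X).trace).re := by rw [Complex.re_sum]
      _ = 2 := by rw [e, Matrix.trace_one]; simp
  have hfin : 2 * η * (N : ℝ) ≤ M * 2 := by
    calc 2 * η * (N : ℝ) = (∑ X : Fin N → Bool, ((E X) * pauli (mvec n X)).trace).re := by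
          rw [hS]; simp
      _ = ∑ X : Fin N → Bool, (((E X) * pauli (mvec n X)).trace).re := by rw [Complex.re_sum]
      _ ≤ ∑ X : Fin N → Bool, M * ((E X).trace).re := Finset.sum_le_sum fun X _ => hub X
      _ = M * ∑ X : Fin N → Bool, ((E X).trace).re := by rw [Finset.mul_sum]
      _ = M * 2 := by rw [hT]
  have hN' : (0 : ℝ) < N := by exact_mod_cast hN
  rw [one_div, inv_mul_eq_div, le_div_iff₀ hN']
  nlinarith

end
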